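/- Define R^m = 2a₁√δ · κ^m (P_m(μ) - P_{m-2}(μ))/(2m-1) for m ≥ 0, where P_m are Legendre polynomials with P_m ≡ 0 for m < 0, a₁ > 0, δ > 0 are constants, and κ, μ ∈ ℂ. Then R satisfies the recurrence R^m = ((2m-3)/m) κμ R^{m-1} - ((m-3)/m) κ² R^{m-2} for m ≥ 2, with R^0 = -2a₁√δ and R^1 = 2a₁√δ κμ. -/

import Mathlib

/-- The Legendre polynomials (as functions), via the three-term recurrence. -/
noncomputable def leg {K : Type*} [Field K] : ℕ → K → K
  | 0, _ => 1
  | 1, x => x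
  | (n+2), x => ((2*(n:K)+3) * x * leg (n+1) x - ((n:K)+1) * leg n x) / ((n:K)+2)

/-- Legendre polynomials extended by `0` to negative indices. -/
noncomputable def legZ {K : Type*} [Field K] (m : ℤ) (x : K) : K :=
  if m < 0 then 0 else leg m.toNat x

lemma legZ_ofNat {K : Type*} [Field K] (n : ℕ) (x : K) : legZ (n : ℤ) x = leg n x := by
  simp [legZ]

lemma legZ_neg {K : Type*} [Field K] (m : ℤ) (hm : m < 0) (x : K) : legZ m x = 0 := by
  simp [legZ, hm]

/-- the kernel `R^m = 2a₁√δ κ^m (P_m(μ) - P_{m-2}(μ))/(2m-1)` satisfies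
the recurrence `R^m = ((2m-3)/m) κμ R^{m-1} - ((m-3)/m) κ² R^{m-2}` for `m ≥ 2`,
with `R^0 = -2a₁√δ` and `R^1 = 2a₁√δ κμ`. -/
theorem stmt_7 (a₁ δ : ℝ) (ha₁ : 0 < a₁) (hδ : 0 < δ) (κ μ : ℂ) (R : ℕ → ℂ)
    (hR : ∀ m : ℕ, R m = 2*(a₁:ℂ)*(Real.sqrt δ : ℂ) * κ^m *
        (legZ (m:ℤ) μ - legZ ((m:ℤ) - 2) μ) / (2*(m:ℂ) - 1)) :
    (∀ m : ℕ, 2 ≤ m →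
      R m = ((2*(m:ℂ) - 3)/(m:ℂ)) * κ * μ * R (m-1)
            - (((m:ℂ) - 3)/(m:ℂ)) * κ^2 * R (m-2))
    ∧ R 0 = -(2*(a₁:ℂ)*(Real.sqrt δ : ℂ))
    ∧ R 1 = 2*(a₁:ℂ)*(Real.sqrt δ : ℂ)*κ*μ := by
  refine ⟨?_, ?_, ?_⟩
  · intro m hm
    obtain ⟨n, rfl⟩ : ∃ n, m = n + 2 := ⟨m - 2, by omega⟩
    match n with
    | 0 =>
        simp only [hR]
        norm_num [legZ, leg, show Int.toNat 3 = 3 from rfl, show Int.toNat 2 = 2 from rfl]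
        ring
    | 1 =>
        simp only [hR]
        norm_num [legZ, leg, show Int.toNat 3 = 3 from rfl, show Int.toNat 2 = 2 from rfl]
        ring
    | (k+2) =>
        simp only [hR]
        have e1 : ((k:ℕ)+2+2 : ℕ) - 1 = k + 3 := by omega
        have e2 : ((k:ℕ)+2+2 : ℕ) - 2 = k + 2 := by omega
        rw [e1, e2]
        have hZ : ∀ j : ℕ, legZ (j : ℤ) μ = leg j μ := fun j => legZ_ofNat j μ
        have c1 : ((k+2+2 : ℕ) : ℤ) = ((k+4 : ℕ) : ℤ) := by push_cast; ring
        have c2 : ((k+2+2 : ℕ) : ℤ) - 2 = ((k+2 : ℕ) : ℤ) := by push_cast; ring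
        have c3 : ((k+3 : ℕ) : ℤ) - 2 = ((k+1 : ℕ) : ℤ) := by push_cast; ring
        have c4 : ((k+2 : ℕ) : ℤ) - 2 = ((k : ℕ) : ℤ) := by push_cast; ring
        rw [c1, c2, c3, c4]; simp only [hZ]
        have l4 : leg (k+4) μ = ((2*((k:ℂ)+2)+3) * μ * leg (k+3) μ
            - (((k:ℂ)+2)+1) * leg (k+2) μ) / (((k:ℂ)+2)+2) := by
          show leg (k+2+2) μ = _
          rw [leg]
          push_cast
          ring_nf
        have l2 : leg (k+2) μ = ((2*(k:ℂ)+3) * μ * leg (k+1) μ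
            - ((k:ℂ)+1) * leg k μ) / ((k:ℂ)+2) := by
          rw [leg]
        rw [l4, l2]
        have h2 : ((k:ℂ)+2) ≠ 0 := by
          have := Nat.cast_ne_zero (R := ℂ) (n := k+2) |>.mpr (by omega)
          push_cast at this; convert this using 1
        have h4 : ((k:ℂ)+4) ≠ 0 := by
          have := Nat.cast_ne_zero (R := ℂ) (n := k+4) |>.mpr (by omega)
          push_cast at this; convert this using 1
        have h3 : (2*(k:ℂ)+3) ≠ 0 := by
          have := Nat.cast_ne_zero (R := ℂ) (n := 2*k+3) |>.mpr (by omega)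
          push_cast at this; convert this using 1
        have h5 : (2*(k:ℂ)+5) ≠ 0 := by
          have := Nat.cast_ne_zero (R := ℂ) (n := 2*k+5) |>.mpr (by omega)
          push_cast at this; convert this using 1
        have h7 : (2*(k:ℂ)+7) ≠ 0 := by
          have := Nat.cast_ne_zero (R := ℂ) (n := 2*k+7) |>.mpr (by omega)
          push_cast at this; convert this using 1
        push_cast
        have h4' : ((k:ℂ)+2+2) ≠ 0 := by convert h4 using 1; ring
        have h7' : (2*((k:ℂ)+2+2) - 1) ≠ 0 := by convert h7 using 1; ring
        have h5' : (2*((k:ℂ)+3) - 1) ≠ 0 := by convert h5 using 1; ring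
        have h3' : (2*((k:ℂ)+2) - 1) ≠ 0 := by convert h3 using 1; ring
        field_simp
        ring
  · rw [hR]
    norm_num [legZ, leg]
    ring
  · rw [hR]
    norm_num [legZ, leg]
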